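/- arXiv:2412.18595 — 2 statements merged into one kernel-verified Lean document; each statement's English description precedes it below -/
import Mathlib

section
/- If a 3-regular graph G has a 3-basis of its cycle space, then G has girth at most 7. -/
open scoped Classical

noncomputable section

/-- Helper: quotients of finite types are finite. -/
noncomputable def quotFintype {α : Type} [Fintype α] (r : α → α → Prop) : Fintype (Quot r) :=
  Fintype.ofSurjective (Quot.mk r) fun q => Quot.exists_rep q

/-- A finite multigraph.  Each edge `e` carries an (arbitrarily chosen) ordering of its two
endpoints, `fst e` and `snd e`; a loop is an edge with `fst e = snd e`. -/
structure Multigraph where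
  V : Type
  E : Type
  fintV : Fintype V
  fintE : Fintype E
  fst : E → V
  snd : E → V

attribute [instance] Multigraph.fintV Multigraph.fintE

namespace Multigraph

variable (G : Multigraph)

/-- Incidence of a vertex and an edge, modulo 2 (a loop is incident twice, i.e. 0 mod 2). -/
noncomputable def inc (v : G.V) (e : G.E) : ZMod 2 :=
  (if G.fst e = v then 1 else 0) + (if G.snd e = v then 1 else 0)

/-- The cycle space of `G` over `F_2`: characteristic vectors of edge sets in which every
vertex has even degree (i.e. Eulerian subgraphs), with addition = symmetric difference. -/
noncomputable def cycleSpace : Submodule (ZMod 2) (G.E → ZMod 2) where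
  carrier := {x | ∀ v : G.V, ∑ e : G.E, G.inc v e * x e = 0}
  zero_mem' := by intro v; simp
  add_mem' := by
    intro a b ha hb v
    have h : ∀ e : G.E, G.inc v e * (a + b) e = G.inc v e * a e + G.inc v e * b e := by
      intro e
      show G.inc v e * (a e + b e) = G.inc v e * a e + G.inc v e * b e
      ring
    rw [Finset.sum_congr rfl fun e _ => h e, Finset.sum_add_distrib, ha v, hb v, add_zero]
  smul_mem' := by
    intro c x hx v
    have h : ∀ e : G.E, G.inc v e * (c • x) e = c * (G.inc v e * x e) := by
      intro e
      show G.inc v e * (c * x e) = c * (G.inc v e * x e)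
      ring
    rw [Finset.sum_congr rfl fun e _ => h e, ← Finset.mul_sum, hx v, mul_zero]

/-- The charge of an edge `e` with respect to a collection `B` of (characteristic vectors of)
subgraphs: the number of members of `B` containing `e`. -/
noncomputable def charge (B : Finset (G.E → ZMod 2)) (e : G.E) : ℕ :=
  (B.filter fun x => x e ≠ 0).card

/-- `B` is a basis of the cycle space of `G`. -/
def IsCycleBasis (B : Finset (G.E → ZMod 2)) : Prop :=
  (∀ x ∈ B, x ∈ G.cycleSpace) ∧
    LinearIndependent (ZMod 2) (fun x : B => (x : G.E → ZMod 2)) ∧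
    Submodule.span (ZMod 2) (B : Set (G.E → ZMod 2)) = G.cycleSpace

/-- `B` is a `k`-basis: a basis of the cycle space in which every edge has charge at most `k`. -/
def IsKBasis (k : ℕ) (B : Finset (G.E → ZMod 2)) : Prop :=
  G.IsCycleBasis B ∧ ∀ e : G.E, G.charge B e ≤ k

/-- The basis number of `G`: the least `k` such that `G` has a `k`-basis. -/
noncomputable def basisNum : ℕ := sInf {k | ∃ B, G.IsKBasis k B}

/-- Adjacency of two vertices. -/
def Adj (a b : G.V) : Prop :=
  ∃ e : G.E, (G.fst e = a ∧ G.snd e = b) ∨ (G.fst e = b ∧ G.snd e = a)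

/-- Connectivity. -/
def Connected : Prop :=
  Nonempty G.V ∧ ∀ a b : G.V, Relation.ReflTransGen G.Adj a b

/-- Degree of a vertex (a loop counts twice). -/
noncomputable def degree (v : G.V) : ℕ :=
  ∑ e : G.E, ((if G.fst e = v then 1 else 0) + (if G.snd e = v then 1 else 0))

/-- The subgraph with the same vertex set and edge set restricted to `S`. -/
noncomputable def edgeRestrict (S : Set G.E) : Multigraph where
  V := G.V
  E := S
  fintV := G.fintV
  fintE := (Set.toFinite S).fintype
  fst := fun e => G.fst e.1
  snd := fun e => G.snd e.1

/-- Deletion of a vertex (and all edges incident with it). -/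
noncomputable def deleteVertex (v : G.V) : Multigraph where
  V := {u : G.V // u ≠ v}
  E := {e : G.E // G.fst e ≠ v ∧ G.snd e ≠ v}
  fintV := by classical exact inferInstance
  fintE := by classical exact inferInstance
  fst := fun e => ⟨G.fst e.1, e.2.1⟩
  snd := fun e => ⟨G.snd e.1, e.2.2⟩

/-- `G` is 2-connected: at least 3 vertices, connected, and no cutvertex. -/
def TwoConnected : Prop :=
  G.Connected ∧ 3 ≤ Nat.card G.V ∧ ∀ v : G.V, (G.deleteVertex v).Connected

/-- A cycle of length `n` in `G`: `n` distinct vertices and `n` distinct edges, with edge `i`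
joining vertex `i` to vertex `i+1` (cyclically). -/
def IsCycleOn (n : ℕ) (vs : Fin n → G.V) (es : Fin n → G.E) : Prop :=
  Function.Injective vs ∧ Function.Injective es ∧
    ∀ i : Fin n,
      (G.fst (es i) = vs i ∧ G.snd (es i) = vs (finRotate n i)) ∨
      (G.fst (es i) = vs (finRotate n i) ∧ G.snd (es i) = vs i)

/-- A path with `n` edges, given by its (distinct) vertices and its edges. -/
def IsPathOn (n : ℕ) (vs : Fin (n + 1) → G.V) (es : Fin n → G.E) : Prop :=
  Function.Injective vs ∧
    ∀ i : Fin n,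
      (G.fst (es i) = vs i.castSucc ∧ G.snd (es i) = vs i.succ) ∨
      (G.fst (es i) = vs i.succ ∧ G.snd (es i) = vs i.castSucc)

/-- `p` is the characteristic vector of (the edge set of) a path from `s` to `t`. -/
def IsPathVec (s t : G.V) (p : G.E → ZMod 2) : Prop :=
  ∃ (n : ℕ) (vs : Fin (n + 1) → G.V) (es : Fin n → G.E),
    G.IsPathOn n vs es ∧ vs 0 = s ∧ vs (Fin.last n) = t ∧
      ∀ f : G.E, p f ≠ 0 ↔ ∃ i, es i = f

/-- Two edges lie in a common block: they are equal, or they lie on a common cycle. -/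
def BlockRel (e f : G.E) : Prop :=
  e = f ∨ ∃ (n : ℕ) (vs : Fin n → G.V) (es : Fin n → G.E),
    1 ≤ n ∧ G.IsCycleOn n vs es ∧ (∃ i, es i = e) ∧ (∃ j, es j = f)

/-- `T` is a spanning tree of `G` (as an edge set): the spanning subgraph with edge set `T`
is connected and has no cycles. -/
def IsSpanningTree (T : Set G.E) : Prop :=
  (G.edgeRestrict T).Connected ∧
    ∀ (n : ℕ) (vs : Fin n → (G.edgeRestrict T).V) (es : Fin n → (G.edgeRestrict T).E),
      (G.edgeRestrict T).IsCycleOn n vs es → n = 0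

/-- Contraction of the edge `e`: identify its two endpoints and delete `e`. -/
noncomputable def contract (e : G.E) : Multigraph where
  V := Quot (fun a b : G.V => a = G.fst e ∧ b = G.snd e)
  E := {f : G.E // f ≠ e}
  fintV := quotFintype _
  fintE := by classical exact inferInstance
  fst := fun f => Quot.mk _ (G.fst f.1)
  snd := fun f => Quot.mk _ (G.snd f.1)

/-- Addition of a (possibly parallel) edge joining `u` and `v`. -/
noncomputable def addEdge (u v : G.V) : Multigraph where
  V := G.V
  E := Option G.E
  fintV := G.fintV
  fintE := inferInstance
  fst := fun o => o.elim u G.fst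
  snd := fun o => o.elim v G.snd

/-- Subdivision of the edge `e`: delete `e` and add a new vertex (`none`) joined to both
endpoints of `e`. -/
noncomputable def subdivide (e : G.E) : Multigraph where
  V := Option G.V
  E := {f : G.E // f ≠ e} ⊕ Bool
  fintV := inferInstance
  fintE := by classical exact inferInstance
  fst := Sum.elim (fun f => some (G.fst f.1))
    (fun b => cond b (some (G.fst e)) (some (G.snd e)))
  snd := Sum.elim (fun f => some (G.snd f.1)) (fun _ => none)

/-- Replacement of the edge `e` of `G` by the graph `H` with terminals `s`, `t`:
delete `e`, take the disjoint union with `H`, and identify the endpoints of `e`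
with the terminals. -/
noncomputable def replaceEdge (e : G.E) (H : Multigraph) (s t : H.V) : Multigraph where
  V := Quot (fun a b : G.V ⊕ H.V =>
        (a = Sum.inl (G.fst e) ∧ b = Sum.inr s) ∨ (a = Sum.inl (G.snd e) ∧ b = Sum.inr t))
  E := {f : G.E // f ≠ e} ⊕ H.E
  fintV := quotFintype _
  fintE := by classical exact inferInstance
  fst := Sum.elim (fun f => Quot.mk _ (Sum.inl (G.fst f.1)))
    (fun f => Quot.mk _ (Sum.inr (H.fst f)))
  snd := Sum.elim (fun f => Quot.mk _ (Sum.inl (G.snd f.1)))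
    (fun f => Quot.mk _ (Sum.inr (H.snd f)))

/-! ### Combinatorial embeddings (rotation systems) and planarity -/

/-- Darts: each edge gives two darts. -/
def Dart : Type := G.E × Bool

noncomputable instance : Fintype G.Dart := inferInstanceAs (Fintype (G.E × Bool))

/-- The vertex at which a dart is based. -/
def dartVertex (d : G.Dart) : G.V := cond d.2 (G.fst d.1) (G.snd d.1)

/-- The involution exchanging the two darts of each edge. -/
def dartFlip : Equiv.Perm G.Dart where
  toFun d := (d.1, !d.2)
  invFun d := (d.1, !d.2)
  left_inv := fun d => by cases d; simp <;> rfl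
  right_inv := fun d => by cases d; simp <;> rfl

/-- `σ` is a rotation system: its orbits are exactly the sets of darts based at a
common vertex. -/
def IsRotation (σ : Equiv.Perm G.Dart) : Prop :=
  ∀ d d' : G.Dart, σ.SameCycle d d' ↔ G.dartVertex d = G.dartVertex d'

/-- The face permutation of a rotation system. -/
def facePerm (σ : Equiv.Perm G.Dart) : Equiv.Perm G.Dart := G.dartFlip.trans σ

/-- The faces of the embedding given by `σ`: orbits of the face permutation. -/
def Faces (σ : Equiv.Perm G.Dart) : Type := Quot (G.facePerm σ).SameCycle

/-- The face containing a given dart. -/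
def faceOf (σ : Equiv.Perm G.Dart) (d : G.Dart) : G.Faces σ := Quot.mk _ d

noncomputable def numFaces (σ : Equiv.Perm G.Dart) : ℕ := Nat.card (G.Faces σ)

noncomputable def numComponents : ℕ := Nat.card (Quot G.Adj)

/-- The number of connected components containing at least one edge. -/
noncomputable def numEdgedComponents : ℕ :=
  Nat.card {c : Quot G.Adj // ∃ e : G.E, Quot.mk G.Adj (G.fst e) = c}

/-- `σ` is a planar (genus zero) embedding, by Euler's formula
(componentwise `V - E + F = 2`, where components without edges contribute one global face). -/
def IsPlanarRotation (σ : Equiv.Perm G.Dart) : Prop :=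
  G.IsRotation σ ∧
    G.numFaces σ + Nat.card G.V = Nat.card G.E + G.numComponents + G.numEdgedComponents

/-- `G` is planar: it admits a genus-zero combinatorial embedding. -/
def IsPlanar : Prop := ∃ σ : Equiv.Perm G.Dart, G.IsPlanarRotation σ

/-- The boundary of a face, as an element of `F_2^E`: the edges having exactly one of
their two darts on the face. -/
noncomputable def faceBoundary (σ : Equiv.Perm G.Dart) (c : G.Faces σ) : G.E → ZMod 2 :=
  fun e => ∑ b : Bool, if G.faceOf σ (e, b) = c then 1 else 0

/-- The vertex `v` lies on the face `c`. -/
def VertexOnFace (σ : Equiv.Perm G.Dart) (v : G.V) (c : G.Faces σ) : Prop :=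
  ∃ d : G.Dart, G.faceOf σ d = c ∧ G.dartVertex d = v

/-- The edge `e` lies on the face `c`. -/
def EdgeOnFace (σ : Equiv.Perm G.Dart) (e : G.E) (c : G.Faces σ) : Prop :=
  ∃ b : Bool, G.faceOf σ (e, b) = c

end Multigraph

namespace Multigraph
variable (G : Multigraph)

/-- A loop gives a 1-cycle. -/
lemma cycle_of_loop (e : G.E) (h : G.fst e = G.snd e) :
    G.IsCycleOn 1 (fun _ => G.fst e) (fun _ => e) := by
  refine ⟨fun a b _ => Subsingleton.elim a b, fun a b _ => Subsingleton.elim a b, ?_⟩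
  intro i
  exact Or.inl ⟨rfl, h.symm⟩

lemma zmod2_cases (a : ZMod 2) : a = 0 ∨ a = 1 := by
  fin_cases a
  exacts [Or.inl rfl, Or.inr rfl]

/-- Mod-2 degree of the support at each vertex is even (no loops). -/
lemma even_touch (hnl : ∀ e, G.fst e ≠ G.snd e) (x : G.E → ZMod 2)
    (hx : x ∈ G.cycleSpace) (v : G.V) :
    2 ∣ (Finset.univ.filter fun e => (G.fst e = v ∨ G.snd e = v) ∧ x e ≠ 0).card := by
  have hxv : ∑ e : G.E, G.inc v e * x e = 0 := hx v
  have hterm : ∀ e : G.E, G.inc v e * x e =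
      if (G.fst e = v ∨ G.snd e = v) ∧ x e ≠ 0 then 1 else 0 := by
    intro e
    unfold Multigraph.inc
    rcases zmod2_cases (x e) with h0 | h1
    · simp [h0]
    · by_cases hf : G.fst e = v <;> by_cases hs : G.snd e = v
      · exact absurd (hf.trans hs.symm) (hnl e)
      · simp [hf, hs, h1]
      · simp [hf, hs, h1]
      · simp [hf, hs, h1]
  rw [Finset.sum_congr rfl fun e _ => hterm e, Finset.sum_boole] at hxv
  exact (ZMod.natCast_eq_zero_iff _ 2).mp hxv

/-- At most 3 distinct edges at a vertex of degree 3 (no loops needed). -/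
lemma card_incident_le (v : G.V) (hreg : G.degree v = 3) :
    (Finset.univ.filter fun e => G.fst e = v ∨ G.snd e = v).card ≤ 3 := by
  rw [← hreg]
  unfold Multigraph.degree
  rw [Finset.card_filter]
  apply Finset.sum_le_sum
  intro e _
  by_cases hf : G.fst e = v <;> by_cases hs : G.snd e = v <;> simp [hf, hs]

/-- Handshake: `2m = 3n` for a cubic multigraph. -/
lemma handshake (hreg : ∀ v : G.V, G.degree v = 3) :
    2 * Fintype.card G.E = 3 * Fintype.card G.V := by
  have h1 : ∑ v : G.V, G.degree v = 3 * Fintype.card G.V := by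
    rw [Finset.sum_congr rfl fun v _ => hreg v]
    simp [Finset.card_univ, mul_comm]
  have h2 : ∑ v : G.V, G.degree v = 2 * Fintype.card G.E := by
    unfold Multigraph.degree
    rw [Finset.sum_comm]
    have : ∀ e : G.E, (∑ v : G.V,
        ((if G.fst e = v then 1 else 0) + (if G.snd e = v then 1 else 0))) = 2 := by
      intro e
      rw [Finset.sum_add_distrib, Finset.sum_ite_eq, Finset.sum_ite_eq]
      simp
    rw [Finset.sum_congr rfl fun e _ => this e]
    simp [Finset.card_univ, mul_comm]
  omega

open Module

/-- The incidence map. -/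
noncomputable def incMap : (G.E → ZMod 2) →ₗ[ZMod 2] (G.V → ZMod 2) :=
  LinearMap.pi fun v => ∑ e : G.E, G.inc v e • LinearMap.proj e

lemma incMap_apply (x : G.E → ZMod 2) (v : G.V) :
    G.incMap x v = ∑ e : G.E, G.inc v e * x e := by
  simp [incMap, LinearMap.pi_apply, LinearMap.sum_apply, LinearMap.smul_apply,
    LinearMap.proj_apply, smul_eq_mul]

lemma ker_incMap : LinearMap.ker G.incMap = G.cycleSpace := by
  ext x
  constructor
  · intro h v
    have h2 : G.incMap x v = 0 := by rw [LinearMap.mem_ker.mp h]; rfl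
    rw [incMap_apply] at h2
    exact h2
  · intro h
    apply LinearMap.mem_ker.mpr
    funext v
    rw [incMap_apply]
    exact h v

/-- The sum-over-vertices functional. -/
noncomputable def sumFun : (G.V → ZMod 2) →ₗ[ZMod 2] ZMod 2 :=
  ∑ v : G.V, LinearMap.proj v

lemma sumFun_apply (y : G.V → ZMod 2) : G.sumFun y = ∑ v : G.V, y v := by
  simp [sumFun, LinearMap.sum_apply, LinearMap.proj_apply]

lemma sum_inc (e : G.E) : ∑ v : G.V, G.inc v e = 0 := by
  unfold Multigraph.inc
  rw [Finset.sum_add_distrib, Finset.sum_ite_eq, Finset.sum_ite_eq]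
  simp
  decide

lemma range_le_ker : LinearMap.range G.incMap ≤ LinearMap.ker G.sumFun := by
  rintro y ⟨x, rfl⟩
  rw [LinearMap.mem_ker, sumFun_apply]
  have h : ∀ v : G.V, G.incMap x v = ∑ e : G.E, G.inc v e * x e := fun v => incMap_apply G x v
  rw [Finset.sum_congr rfl fun v _ => h v, Finset.sum_comm]
  have h2 : ∀ e : G.E, (∑ v : G.V, G.inc v e * x e) = 0 := by
    intro e
    rw [← Finset.sum_mul, sum_inc, zero_mul]
  rw [Finset.sum_congr rfl fun e _ => h2 e, Finset.sum_const, smul_zero]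

lemma finrank_cycleSpace_bound (hne : Nonempty G.V) :
    Fintype.card G.E + 1 ≤ finrank (ZMod 2) G.cycleSpace + Fintype.card G.V := by
  have h1 : finrank (ZMod 2) (LinearMap.range G.incMap)
      + finrank (ZMod 2) (LinearMap.ker G.incMap) = Fintype.card G.E := by
    rw [LinearMap.finrank_range_add_finrank_ker, Module.finrank_pi]
  have h2 : finrank (ZMod 2) (LinearMap.range G.incMap)
      ≤ finrank (ZMod 2) (LinearMap.ker G.sumFun) :=
    Submodule.finrank_mono (range_le_ker G)
  have h3 : finrank (ZMod 2) (LinearMap.range G.sumFun)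
      + finrank (ZMod 2) (LinearMap.ker G.sumFun) = Fintype.card G.V := by
    rw [LinearMap.finrank_range_add_finrank_ker, Module.finrank_pi]
  have h4 : LinearMap.range G.sumFun = ⊤ := by
    obtain ⟨v0⟩ := hne
    have h1mem : (1 : ZMod 2) ∈ LinearMap.range G.sumFun := by
      refine ⟨fun u => if u = v0 then 1 else 0, ?_⟩
      rw [sumFun_apply, Finset.sum_ite_eq']
      simp
    rw [Submodule.eq_top_iff']
    intro a
    simpa using Submodule.smul_mem _ a h1mem
  have h5 : finrank (ZMod 2) (LinearMap.range G.sumFun) = 1 := by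
    rw [h4, finrank_top, finrank_self]
  rw [ker_incMap] at h1
  omega

/-- From a nonzero element of the cycle space one can extract a cycle whose length is at
most the size of the support. -/
lemma exists_cycle_of_cycleSpace (hnl : ∀ e, G.fst e ≠ G.snd e) (x : G.E → ZMod 2)
    (hx : x ∈ G.cycleSpace) (hx0 : x ≠ 0) :
    ∃ (n : ℕ) (vs : Fin n → G.V) (es : Fin n → G.E),
      1 ≤ n ∧ n ≤ (Finset.univ.filter fun e => x e ≠ 0).card ∧ G.IsCycleOn n vs es := by
  set P : ℕ → Prop := fun L => ∃ p : (ℕ → G.V) × (ℕ → G.E),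
    (∀ i k, i ≤ L → k ≤ L → p.1 i = p.1 k → i = k) ∧
    (∀ i, i < L → x (p.2 i) ≠ 0) ∧
    (∀ i, i < L → (G.fst (p.2 i) = p.1 i ∧ G.snd (p.2 i) = p.1 (i+1)) ∨
                  (G.fst (p.2 i) = p.1 (i+1) ∧ G.snd (p.2 i) = p.1 i))
  have hbound : ∀ L, P L → L + 1 ≤ Fintype.card G.V := by
    rintro L ⟨⟨vs, es⟩, hinj, -, -⟩
    have hinj2 : Function.Injective (fun i : Fin (L + 1) => vs i.val) := by
      intro a b h
      exact Fin.ext (hinj _ _ (Nat.lt_succ_iff.mp a.isLt) (Nat.lt_succ_iff.mp b.isLt) h)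
    simpa using Fintype.card_le_of_injective _ hinj2
  have hP1 : P 1 := by
    have he : ∃ e, x e ≠ 0 := by
      by_contra h
      push_neg at h
      exact hx0 (funext h)
    obtain ⟨e, he⟩ := he
    refine ⟨(fun i => if i = 0 then G.fst e else G.snd e, fun _ => e), ?_, fun _ _ => he, ?_⟩
    · intro i k hi hk h
      dsimp only at h
      interval_cases i <;> interval_cases k
      · rfl
      · exfalso; apply hnl e; norm_num at h; exact h
      · exfalso; apply hnl e; norm_num at h; exact h.symm
      · rfl
    · intro i hi
      have hi0 : i = 0 := by omega
      subst hi0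
      left
      exact ⟨by norm_num, by norm_num⟩
  have hcard1 : 1 ≤ Fintype.card G.V := by have := hbound 1 hP1; omega
  set N := Nat.findGreatest P (Fintype.card G.V) with hNdef
  have hPN : P N := Nat.findGreatest_spec hcard1 hP1
  have hN1 : 1 ≤ N := by
    by_contra h
    exact Nat.findGreatest_is_greatest (by omega) hcard1 hP1
  obtain ⟨⟨vs, es⟩, hinj, hsup, hpath⟩ := hPN
  dsimp only at hinj hsup hpath
  -- the last path edge is incident with the last vertex
  have hlast : G.fst (es (N - 1)) = vs N ∨ G.snd (es (N - 1)) = vs N := by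
    have h := hpath (N - 1) (by omega)
    have hNN : N - 1 + 1 = N := by omega
    rw [hNN] at h
    tauto
  -- a second support edge at the last vertex
  have heven := even_touch G hnl x hx (vs N)
  have hmemF : es (N - 1) ∈ Finset.univ.filter
      fun e => (G.fst e = vs N ∨ G.snd e = vs N) ∧ x e ≠ 0 :=
    Finset.mem_filter.mpr ⟨Finset.mem_univ _, hlast, hsup (N - 1) (by omega)⟩
  have hFpos : 1 < (Finset.univ.filter
      fun e => (G.fst e = vs N ∨ G.snd e = vs N) ∧ x e ≠ 0).card := by
    have h1 : 0 < (Finset.univ.filter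
        fun e => (G.fst e = vs N ∨ G.snd e = vs N) ∧ x e ≠ 0).card :=
      Finset.card_pos.mpr ⟨_, hmemF⟩
    omega
  obtain ⟨f, hfF, hfne⟩ := Finset.exists_mem_ne hFpos (es (N - 1))
  obtain ⟨hfinc, hfx⟩ := (Finset.mem_filter.mp hfF).2
  -- the other endpoint of f
  obtain ⟨w, hwv, hfw⟩ : ∃ w, w ≠ vs N ∧
      ((G.fst f = vs N ∧ G.snd f = w) ∨ (G.fst f = w ∧ G.snd f = vs N)) := by
    rcases hfinc with h | h
    · exact ⟨G.snd f, fun hw => hnl f (by rw [h, hw]), Or.inl ⟨h, rfl⟩⟩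
    · exact ⟨G.fst f, fun hw => hnl f (by rw [h, hw]), Or.inr ⟨rfl, h⟩⟩
  -- the path edges are pairwise distinct
  have hesinj : ∀ i k, i < N → k < N → es i = es k → i = k := by
    intro i k hi hk h
    rcases hpath i hi with ⟨h1, h2⟩ | ⟨h1, h2⟩ <;>
      rcases hpath k hk with ⟨h3, h4⟩ | ⟨h3, h4⟩ <;> rw [h] at h1 h2
    · exact hinj i k (by omega) (by omega) (h1.symm.trans h3)
    · have e1 := hinj i (k + 1) (by omega) (by omega) (h1.symm.trans h3)
      have e2 := hinj (i + 1) k (by omega) (by omega) (h2.symm.trans h4)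
      omega
    · have e1 := hinj (i + 1) k (by omega) (by omega) (h1.symm.trans h3)
      have e2 := hinj i (k + 1) (by omega) (by omega) (h2.symm.trans h4)
      omega
    · have := hinj (i + 1) (k + 1) (by omega) (by omega) (h1.symm.trans h3)
      omega
  -- f differs from all path edges
  have hfes : ∀ i, i < N → f ≠ es i := by
    intro i hi heq
    by_cases hiN : i = N - 1
    · exact hfne (by rw [heq, hiN])
    · have hv1 : G.fst f = vs N ∨ G.snd f = vs N := by tauto
      rcases hpath i hi with ⟨h1, h2⟩ | ⟨h1, h2⟩ <;> rcases hv1 with hv | hv <;>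
        rw [heq] at hv
      · have := hinj i N (by omega) (le_refl N) (h1.symm.trans hv)
        omega
      · have := hinj (i + 1) N (by omega) (le_refl N) (h2.symm.trans hv)
        omega
      · have := hinj (i + 1) N (by omega) (le_refl N) (h1.symm.trans hv)
        omega
      · have := hinj i N (by omega) (le_refl N) (h2.symm.trans hv)
        omega
  by_cases hw : ∃ j, j ≤ N ∧ vs j = w
  · -- close up a cycle
    obtain ⟨j, hjN, hjw⟩ := hw
    have hjltN : j < N := by
      rcases Nat.lt_or_ge j N with h | h
      · exact h
      · exfalso
        have hjN' : j = N := by omega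
        exact hwv (by rw [← hjw, hjN'])
    have hkey : ∀ a b : ℕ, a < N - j + 1 → b < N - j + 1 →
        (if a + 1 = N - j + 1 then f else es (j + a)) =
        (if b + 1 = N - j + 1 then f else es (j + b)) → a = b := by
      intro a b ha hb h
      by_cases ha1 : a + 1 = N - j + 1 <;> by_cases hb1 : b + 1 = N - j + 1
      · omega
      · rw [if_pos ha1, if_neg hb1] at h
        exact absurd h (hfes (j + b) (by omega))
      · rw [if_neg ha1, if_pos hb1] at h
        exact absurd h.symm (hfes (j + a) (by omega))
      · rw [if_neg ha1, if_neg hb1] at h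
        have := hesinj (j + a) (j + b) (by omega) (by omega) h
        omega
    refine ⟨N - j + 1, fun i => vs (j + i.val),
      fun i => if i.val + 1 = N - j + 1 then f else es (j + i.val), by omega, ?_, ?_, ?_, ?_⟩
    · -- length bound
      have h1 : ∀ a : Fin (N - j + 1),
          (if a.val + 1 = N - j + 1 then f else es (j + a.val)) ∈
            Finset.univ.filter fun e => x e ≠ 0 := by
        intro a
        by_cases ha1 : a.val + 1 = N - j + 1
        · rw [if_pos ha1]
          exact Finset.mem_filter.mpr ⟨Finset.mem_univ _, hfx⟩
        · rw [if_neg ha1]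
          refine Finset.mem_filter.mpr ⟨Finset.mem_univ _, hsup (j + a.val) ?_⟩
          have := a.isLt
          omega
      have h2 := Finset.card_le_card_of_injOn
        (s := (Finset.univ : Finset (Fin (N - j + 1))))
        (f := fun a : Fin (N - j + 1) => if a.val + 1 = N - j + 1 then f else es (j + a.val))
        (fun a _ => h1 a)
        (fun a _ b _ h => Fin.ext (hkey a.val b.val a.isLt b.isLt h))
      simpa using h2
    · -- vertex injectivity
      intro a b h
      have ha := a.isLt
      have hb := b.isLt
      dsimp only at h
      have := hinj (j + a.val) (j + b.val) (by omega) (by omega) h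
      exact Fin.ext (by omega)
    · -- edge injectivity
      intro a b h
      dsimp only at h
      exact Fin.ext (hkey a.val b.val a.isLt b.isLt h)
    · -- cycle condition
      intro i
      have hrot : finRotate (N - j + 1) i = i + 1 := finRotate_succ_apply i
      by_cases hi1 : i.val + 1 = N - j + 1
      · have hilast : i = Fin.last (N - j) := by
          apply Fin.ext
          simp only [Fin.val_last]
          omega
        have hval : ((i + 1 : Fin (N - j + 1))).val = 0 := by
          rw [Fin.val_add_one, if_pos hilast]
        have hjiN : j + i.val = N := by
          have := i.isLt
          omega
        dsimp only
        rw [if_pos hi1, hrot, hval, Nat.add_zero j, hjiN, hjw]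
        exact hfw
      · have hine : i ≠ Fin.last (N - j) := by
          intro h
          rw [h] at hi1
          exact hi1 (by simp [Fin.val_last])
        have hval : ((i + 1 : Fin (N - j + 1))).val = i.val + 1 := by
          rw [Fin.val_add_one, if_neg hine]
        dsimp only
        rw [if_neg hi1, hrot, hval]
        have hjlt : j + i.val < N := by
          have := i.isLt
          omega
        have hp := hpath (j + i.val) hjlt
        rw [show j + (i.val + 1) = j + i.val + 1 from by omega]
        exact hp
  · -- extend the path: contradiction with maximality
    push_neg at hw
    have hPN1 : P (N + 1) := by
      refine ⟨(fun i => if i = N + 1 then w else vs i, fun i => if i = N then f else es i),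
        ?_, ?_, ?_⟩
      · intro i k hi hk h
        dsimp only at h
        by_cases hi1 : i = N + 1 <;> by_cases hk1 : k = N + 1
        · omega
        · rw [if_pos hi1, if_neg hk1] at h
          exact absurd h.symm (hw k (by omega))
        · rw [if_neg hi1, if_pos hk1] at h
          exact absurd h (hw i (by omega))
        · rw [if_neg hi1, if_neg hk1] at h
          exact hinj i k (by omega) (by omega) h
      · intro i hi
        dsimp only
        by_cases h : i = N
        · rw [if_pos h]
          exact hfx
        · rw [if_neg h]
          exact hsup i (by omega)
      · intro i hi
        dsimp only
        by_cases h : i = N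
        · subst h
          have hne1 : ¬N = N + 1 := by omega
          simp only [if_pos rfl, hne1, if_false, ite_false, ite_true, if_true,
            eq_self_iff_true]
          exact hfw
        · rw [if_neg h, if_neg (show ¬i = N + 1 by omega),
            if_neg (show ¬i + 1 = N + 1 by omega)]
          exact hpath i (by omega)
    have hlt := hbound (N + 1) hPN1
    exact absurd hPN1 (Nat.findGreatest_is_greatest (n := Fintype.card G.V) (by omega) (by omega))
lemma sum_touch_le_eight (v : G.V) (hnl : ∀ e, G.fst e ≠ G.snd e)
    (hdeg : G.degree v = 3) (B : Finset (G.E → ZMod 2))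
    (hBsub : ∀ x ∈ B, x ∈ G.cycleSpace) (hBch : ∀ e : G.E, G.charge B e ≤ 3) :
    ∑ x ∈ B, (Finset.univ.filter fun e => (G.fst e = v ∨ G.snd e = v) ∧ x e ≠ 0).card ≤ 8 := by
  obtain ⟨Iv, hIv⟩ : ∃ Iv : Finset G.E,
      Iv = Finset.univ.filter fun e : G.E => G.fst e = v ∨ G.snd e = v := ⟨_, rfl⟩
  have hre : ∀ x : G.E → ZMod 2,
      (Finset.univ.filter fun e => (G.fst e = v ∨ G.snd e = v) ∧ x e ≠ 0)
        = Iv.filter fun e => x e ≠ 0 := by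
    intro x
    rw [hIv, Finset.filter_filter]
  have hIv3 : Iv.card ≤ 3 := by rw [hIv]; exact G.card_incident_le v hdeg
  have hsum9 : ∑ x ∈ B, (Iv.filter fun e => x e ≠ 0).card ≤ 9 := by
    have step1 : ∑ x ∈ B, (Iv.filter fun e => x e ≠ 0).card
        = ∑ e ∈ Iv, (B.filter fun x => x e ≠ 0).card := by
      rw [Finset.sum_congr rfl fun x _ => Finset.card_filter _ _, Finset.sum_comm,
        Finset.sum_congr rfl fun e _ => (Finset.card_filter _ _).symm]
    rw [step1]
    calc ∑ e ∈ Iv, (B.filter fun x => x e ≠ 0).card ≤ ∑ _e ∈ Iv, 3 :=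
          Finset.sum_le_sum fun e _ => hBch e
      _ = 3 * Iv.card := by rw [Finset.sum_const, smul_eq_mul, mul_comm]
      _ ≤ 9 := Nat.le_trans (Nat.mul_le_mul_left 3 hIv3) (by norm_num)
  have h02 : ∀ x ∈ B, (Iv.filter fun e => x e ≠ 0).card = 0
      ∨ (Iv.filter fun e => x e ≠ 0).card = 2 := by
    intro x hxB
    have hev := G.even_touch hnl x (hBsub x hxB) v
    rw [hre x] at hev
    have hle : (Iv.filter fun e => x e ≠ 0).card ≤ Iv.card := Finset.card_filter_le _ _
    clear hsum9
    omega
  have heq : ∑ x ∈ B, (Iv.filter fun e => x e ≠ 0).card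
      = 2 * (B.filter fun x => (Iv.filter fun e => x e ≠ 0).card ≠ 0).card := by
    have h2' : ∀ x ∈ B.filter (fun x => (Iv.filter fun e => x e ≠ 0).card ≠ 0),
        (Iv.filter fun e => x e ≠ 0).card = 2 := by
      intro x hx
      obtain ⟨hxB, hxne⟩ := Finset.mem_filter.mp hx
      rcases h02 x hxB with h | h
      · exact absurd h hxne
      · exact h
    rw [← Finset.sum_filter_ne_zero, Finset.sum_congr rfl h2', Finset.sum_const,
      smul_eq_mul, mul_comm]
  rw [Finset.sum_congr rfl fun x _ => congrArg Finset.card (hre x), heq]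
  rw [heq] at hsum9
  clear heq
  generalize hK : (B.filter fun x => (Iv.filter fun e => x e ≠ 0).card ≠ 0).card = K at hsum9 ⊢
  clear hK
  omega

lemma sum_touch_eq (hnl : ∀ e, G.fst e ≠ G.snd e) (x : G.E → ZMod 2) :
    ∑ v : G.V, (Finset.univ.filter fun e => (G.fst e = v ∨ G.snd e = v) ∧ x e ≠ 0).card
      = 2 * (Finset.univ.filter fun e => x e ≠ 0).card := by
  have h1 : ∀ v : G.V, (Finset.univ.filter fun e => (G.fst e = v ∨ G.snd e = v) ∧ x e ≠ 0).card
      = ∑ e : G.E, if (G.fst e = v ∨ G.snd e = v) ∧ x e ≠ 0 then 1 else 0 :=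
    fun v => Finset.card_filter _ _
  rw [Finset.sum_congr rfl fun v _ => h1 v, Finset.sum_comm]
  have h2 : ∀ e : G.E, (∑ v : G.V, if (G.fst e = v ∨ G.snd e = v) ∧ x e ≠ 0 then 1 else 0)
      = if x e ≠ 0 then 2 else 0 := by
    intro e
    by_cases hx : x e = 0
    · simp [hx]
    · have h3 : ∀ v : G.V, (if (G.fst e = v ∨ G.snd e = v) ∧ x e ≠ 0 then (1:ℕ) else 0)
          = (if G.fst e = v then 1 else 0) + (if G.snd e = v then 1 else 0) := by
        intro v
        by_cases hf : G.fst e = v <;> by_cases hs : G.snd e = v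
        · exact absurd (hf.trans hs.symm) (hnl e)
        · simp [hf, hs, hx]
        · simp [hf, hs, hx]
        · simp [hf, hs, hx]
      rw [Finset.sum_congr rfl fun v _ => h3 v, Finset.sum_add_distrib,
        Finset.sum_ite_eq, Finset.sum_ite_eq]
      simp [hx]
  rw [Finset.sum_congr rfl fun e _ => h2 e]
  have h4 : ∀ e : G.E, (if x e ≠ 0 then (2:ℕ) else 0) = 2 * (if x e ≠ 0 then 1 else 0) := by
    intro e
    split <;> ring
  rw [Finset.sum_congr rfl fun e _ => h4 e, ← Finset.mul_sum, ← Finset.card_filter]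

end Multigraph

/-- If a (nonempty) 3-regular graph `G` has a 3-basis of its cycle space,
then `G` has girth at most 7, i.e. it contains a cycle of length at most 7. -/
theorem girth_le_seven_of_cubic_threeBasis (G : Multigraph) (hne : Nonempty G.V)
    (hreg : ∀ v : G.V, G.degree v = 3)
    (B : Finset (G.E → ZMod 2)) (hB : G.IsKBasis 3 B) :
    ∃ (n : ℕ) (vs : Fin n → G.V) (es : Fin n → G.E),
      1 ≤ n ∧ n ≤ 7 ∧ G.IsCycleOn n vs es := by
  by_contra hcon
  push_neg at hcon
  obtain ⟨⟨hBsub, hBli, hBspan⟩, hBch⟩ := hB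
  have hnl : ∀ e, G.fst e ≠ G.snd e := by
    intro e h
    exact hcon 1 (fun _ => G.fst e) (fun _ => e) (le_refl 1) (by omega) (G.cycle_of_loop e h)
  have hcardB : B.card = Module.finrank (ZMod 2) G.cycleSpace := by
    rw [← hBspan]
    exact (finrank_span_finset_eq_card hBli).symm
  have hdim := G.finrank_cycleSpace_bound hne
  rw [← hcardB] at hdim
  have hhs := G.handshake hreg
  have hsupp : ∀ x ∈ B, 8 ≤ (Finset.univ.filter fun e => x e ≠ 0).card := by
    intro x hxB
    have hx0 : x ≠ 0 := by
      have := hBli.ne_zero ⟨x, hxB⟩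
      simpa using this
    obtain ⟨n, vs, es, h1, h2, h3⟩ := G.exists_cycle_of_cycleSpace hnl x (hBsub x hxB) hx0
    by_contra hlt
    push_neg at hlt
    exact hcon n vs es h1 (by omega) h3
  have hglob : 16 * B.card ≤ 8 * Fintype.card G.V := by
    calc 16 * B.card = ∑ _x ∈ B, 16 := by rw [Finset.sum_const, smul_eq_mul, mul_comm]
      _ ≤ ∑ x ∈ B, 2 * (Finset.univ.filter fun e => x e ≠ 0).card :=
          Finset.sum_le_sum fun x hx => by have := hsupp x hx; omega
      _ = ∑ x ∈ B, ∑ v : G.V,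
            (Finset.univ.filter fun e => (G.fst e = v ∨ G.snd e = v) ∧ x e ≠ 0).card := by
          refine Finset.sum_congr rfl fun x _ => ?_
          rw [G.sum_touch_eq hnl x]
      _ = ∑ v : G.V, ∑ x ∈ B,
            (Finset.univ.filter fun e => (G.fst e = v ∨ G.snd e = v) ∧ x e ≠ 0).card :=
          Finset.sum_comm
      _ ≤ ∑ _v : G.V, 8 := Finset.sum_le_sum fun v _ =>
          G.sum_touch_le_eight v hnl (hreg v) B hBsub hBch
      _ = 8 * Fintype.card G.V := by
          rw [Finset.sum_const, smul_eq_mul, mul_comm, Finset.card_univ]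
  omega
end
end

section
/- The Desargues graph (the bipartite double cover of the Petersen graph, a 3-regular graph on 20 vertices) has basis number exactly 3. -/
open scoped Classical

noncomputable section

/-- The Desargues graph, as the generalized Petersen graph `GP(10,3)`: outer vertices
`(false, i)` forming a 10-cycle, inner vertices `(true, i)` joined by chords `i — i+3`,
and spokes joining `(false, i)` to `(true, i)`. -/
noncomputable abbrev desarguesGraph : Multigraph where
  V := Bool × ZMod 10
  E := Fin 3 × ZMod 10
  fintV := inferInstance
  fintE := inferInstance
  fst := fun p => if p.1 = 2 then (true, p.2) else (false, p.2)
  snd := fun p =>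
    if p.1 = 0 then (false, p.2 + 1) else if p.1 = 1 then (true, p.2) else (true, p.2 + 3)

/-! ### Auxiliary development for the Desargues graph -/

namespace DesarguesAux

/-- Incidence function with decidable instances (kernel-computable). -/
def incD (v : Bool × ZMod 10) (e : Fin 3 × ZMod 10) : ZMod 2 :=
  (if desarguesGraph.fst e = v then 1 else 0) + (if desarguesGraph.snd e = v then 1 else 0)

lemma inc_eq (v : Bool × ZMod 10) (e : Fin 3 × ZMod 10) :
    desarguesGraph.inc v e = incD v e := by
  unfold Multigraph.inc incD
  congr

def E1 (v : Bool × ZMod 10) : Fin 3 × ZMod 10 := if v.1 then (1, v.2) else (0, v.2)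
def E2 (v : Bool × ZMod 10) : Fin 3 × ZMod 10 := if v.1 then (2, v.2) else (0, v.2 + 9)
def E3 (v : Bool × ZMod 10) : Fin 3 × ZMod 10 := if v.1 then (2, v.2 + 7) else (1, v.2)

lemma key : ∀ v e, incD v e = if (e = E1 v ∨ e = E2 v ∨ e = E3 v) then 1 else 0 := by decide

lemma distinctE : ∀ v, E1 v ≠ E2 v ∧ E1 v ≠ E3 v ∧ E2 v ≠ E3 v := by decide

/-- The basis cycles: ten 6-cycles and the inner 10-cycle. -/
def cycVec (i : ZMod 10) (e : Fin 3 × ZMod 10) : ZMod 2 :=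
  if e.1 = 2 then (if e.2 = i then 1 else 0)
  else if e.1 = 1 then (if e.2 = i ∨ e.2 = i + 3 then 1 else 0)
  else (if e.2 = i ∨ e.2 = i + 1 ∨ e.2 = i + 2 then 1 else 0)

def cyc (j : Fin 11) : Fin 3 × ZMod 10 → ZMod 2 :=
  if j.val = 10 then (fun e => if e.1 = 2 then 1 else 0) else cycVec (j.val : ZMod 10)

lemma cyc_mem' : ∀ (j : Fin 11) (v : Bool × ZMod 10),
    ∑ e : Fin 3 × ZMod 10, incD v e * cyc j e = 0 := by decide

lemma cyc_inj : Function.Injective cyc := by decide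

lemma charge_le3 : ∀ e : Fin 3 × ZMod 10,
    (Finset.univ.filter fun j : Fin 11 => cyc j e ≠ 0).card ≤ 3 := by decide

/-- Cotree edges: the ten inner edges and one outer edge. -/
def ctedge (j : Fin 11) : Fin 3 × ZMod 10 :=
  if j.val < 10 then (2, (j.val : ZMod 10)) else (0, 9)

/-! ### Sum expansion lemmas -/

lemma sumZ {M : Type*} [AddCommMonoid M] (f : ZMod 10 → M) :
    ∑ i, f i = f 0 + (f 1 + (f 2 + (f 3 + (f 4 + (f 5 + (f 6 + (f 7 + (f 8 + f 9)))))))) := by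
  let g : Fin 10 → M := f
  show ∑ i : Fin 10, g i = _
  simp [Fin.sum_univ_succ]
  rfl

lemma sum11 {M : Type*} [AddCommMonoid M] (f : Fin 11 → M) :
    ∑ i, f i
      = f 0 + (f 1 + (f 2 + (f 3 + (f 4 + (f 5 + (f 6 + (f 7 + (f 8 + (f 9 + f 10))))))))) := by
  simp [Fin.sum_univ_succ]

lemma sumE {M : Type*} [AddCommMonoid M] (f : Fin 3 × ZMod 10 → M) :
    ∑ e, f e = (∑ b : ZMod 10, f (0, b)) + (∑ b : ZMod 10, f (1, b))
      + (∑ b : ZMod 10, f (2, b)) := by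
  rw [Fintype.sum_prod_type, Fin.sum_univ_three]

lemma z2 (a b : ZMod 2) (h : a + b = 0) : a = b := by revert a b; decide

lemma z2self (a : ZMod 2) : a + a = 0 := by revert a; decide

/-- Vertex sums reduce to the three incident edges. -/
lemma sum3 (v : Bool × ZMod 10) (y : Fin 3 × ZMod 10 → ZMod 2) :
    ∑ e, incD v e * y e = y (E1 v) + y (E2 v) + y (E3 v) := by
  obtain ⟨hab, hac, hbc⟩ := distinctE v
  have h1 : ∀ e, incD v e * y e =
      (if e = E1 v then y e else 0) +
        ((if e = E2 v then y e else 0) + (if e = E3 v then y e else 0)) := by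
    intro e
    rw [key]
    by_cases h1 : e = E1 v <;> by_cases h2 : e = E2 v <;> by_cases h3 : e = E3 v <;>
      simp_all <;> subst_vars <;> simp_all
  rw [Finset.sum_congr rfl fun e _ => h1 e, Finset.sum_add_distrib, Finset.sum_add_distrib]
  simp [Finset.sum_ite_eq']
  ring

/-- Vertex equation for cycle space members. -/
lemma vertexEq (y : Fin 3 × ZMod 10 → ZMod 2) (hy : y ∈ desarguesGraph.cycleSpace)
    (v : Bool × ZMod 10) : y (E1 v) + y (E2 v) + y (E3 v) = 0 := by
  have h : ∑ e, desarguesGraph.inc v e * y e = 0 := hy v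
  rw [Finset.sum_congr rfl fun e _ => by rw [inc_eq]] at h
  rwa [sum3] at h

/-- Coefficients of the basis cycles along the cotree edges. -/
lemma indep11 (g : Fin 11 → ZMod 2)
    (h : ∀ j : Fin 11, ∑ i, g i * cyc i (ctedge j) = 0) : g = 0 := by
  have co : ∀ j : Fin 11, j.val < 10 →
      (∀ i, cyc i (ctedge j) = if i = j ∨ i = 10 then 1 else 0) := by decide
  have co10 : ∀ i, cyc i (ctedge 10) = if i = 7 ∨ i = 8 ∨ i = 9 then 1 else 0 := by decide
  have ek : ∀ j : Fin 11, j.val < 10 → g j + g 10 = 0 := by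
    intro j hj
    have := h j
    rw [Finset.sum_congr rfl fun i _ => by rw [co j hj i]] at this
    rw [sum11] at this
    revert this
    fin_cases j <;> first
      | exact absurd hj (by decide)
      | (simp <;> intro h' <;> first | exact h' | (rw [← h']; ring))
  have e10 : g 7 + g 8 + g 9 = 0 := by
    have := h 10
    rw [Finset.sum_congr rfl fun i _ => by rw [co10 i]] at this
    rw [sum11] at this
    simp at this
    rw [← this]; ring
  have h7 := ek 7 (by decide)
  have h8 := ek 8 (by decide)
  have h9 := ek 9 (by decide)
  have h10 : g 10 = 0 := by
    have h78 : g 7 = g 10 := z2 _ _ h7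
    have h88 : g 8 = g 10 := z2 _ _ h8
    have h98 : g 9 = g 10 := z2 _ _ h9
    rw [h78, h88, h98] at e10
    rwa [z2self, zero_add] at e10
  funext i
  have hlt : i.val < 10 ∨ i = 10 := by omega
  rcases hlt with hlt | rfl
  · have := ek i hlt
    rw [h10, add_zero] at this
    exact this
  · exact h10

/-- Leaf elimination: a cycle-space element vanishing on the cotree is zero. -/
lemma elim_zero (y : Fin 3 × ZMod 10 → ZMod 2)
    (hveq : ∀ v, y (E1 v) + y (E2 v) + y (E3 v) = 0)
    (hinner : ∀ k : ZMod 10, y (2, k) = 0) (h09 : y (0, 9) = 0) : y = 0 := by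
  have h1 : ∀ k : ZMod 10, y (1, k) = 0 := by
    intro k
    have := hveq (true, k)
    simp only [E1, E2, E3, if_true] at this
    rw [hinner k, hinner (k + 7), add_zero, add_zero] at this
    exact this
  have eqf : ∀ k : ZMod 10, y (0, k) + y (0, k + 9) = 0 := by
    intro k
    have := hveq (false, k)
    simp only [E1, E2, E3, if_false, Bool.false_eq_true] at this
    rw [h1 k, add_zero] at this
    exact this
  have h00 : y (0, 0) = 0 := by
    have := eqf 0
    rw [show ((0 : ZMod 10) + 9 = 9) from by decide, h09, add_zero] at this
    exact this
  have h01 : y (0, 1) = 0 := by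
    have := eqf 1
    rw [show ((1 : ZMod 10) + 9 = 0) from by decide, h00, add_zero] at this
    exact this
  have h02 : y (0, 2) = 0 := by
    have := eqf 2
    rw [show ((2 : ZMod 10) + 9 = 1) from by decide, h01, add_zero] at this
    exact this
  have h03 : y (0, 3) = 0 := by
    have := eqf 3
    rw [show ((3 : ZMod 10) + 9 = 2) from by decide, h02, add_zero] at this
    exact this
  have h04 : y (0, 4) = 0 := by
    have := eqf 4
    rw [show ((4 : ZMod 10) + 9 = 3) from by decide, h03, add_zero] at this
    exact this
  have h05 : y (0, 5) = 0 := by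
    have := eqf 5
    rw [show ((5 : ZMod 10) + 9 = 4) from by decide, h04, add_zero] at this
    exact this
  have h06 : y (0, 6) = 0 := by
    have := eqf 6
    rw [show ((6 : ZMod 10) + 9 = 5) from by decide, h05, add_zero] at this
    exact this
  have h07 : y (0, 7) = 0 := by
    have := eqf 7
    rw [show ((7 : ZMod 10) + 9 = 6) from by decide, h06, add_zero] at this
    exact this
  have h08 : y (0, 8) = 0 := by
    have := eqf 8
    rw [show ((8 : ZMod 10) + 9 = 7) from by decide, h07, add_zero] at this
    exact this
  have h0 : ∀ b : ZMod 10, y (0, b) = 0 := by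
    intro b; fin_cases b <;> assumption
  funext e
  obtain ⟨a, b⟩ := e
  show y (a, b) = 0
  fin_cases a
  · exact h0 b
  · exact h1 b
  · exact hinner b

/-! ### Nat-level enumeration of the cycle space -/

def bit (n : ℕ) (i : ℕ) : ℕ := n / 2^i % 2

lemma bit_lt (n i : ℕ) : bit n i < 2 := Nat.mod_lt _ (by norm_num)

def dec (n : ℕ) (i : Fin 11) : ZMod 2 := if bit n (i : ℕ) = 1 then 1 else 0

def wN (n : ℕ) : ℕ :=
  ((bit n 0 + bit n 8 + bit n 9) % 2 + ((bit n 0 + bit n 1 + bit n 9) % 2 + ((bit n 0 + bit n 1 + bit n 2) % 2 + ((bit n 1 + bit n 2 + bit n 3) % 2 + ((bit n 2 + bit n 3 + bit n 4) % 2 + ((bit n 3 + bit n 4 + bit n 5) % 2 + ((bit n 4 + bit n 5 + bit n 6) % 2 + ((bit n 5 + bit n 6 + bit n 7) % 2 + ((bit n 6 + bit n 7 + bit n 8) % 2 + ((bit n 7 + bit n 8 + bit n 9) % 2)))))))))) +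
  ((bit n 0 + bit n 7) % 2 + ((bit n 1 + bit n 8) % 2 + ((bit n 2 + bit n 9) % 2 + ((bit n 0 + bit n 3) % 2 + ((bit n 1 + bit n 4) % 2 + ((bit n 2 + bit n 5) % 2 + ((bit n 3 + bit n 6) % 2 + ((bit n 4 + bit n 7) % 2 + ((bit n 5 + bit n 8) % 2 + ((bit n 6 + bit n 9) % 2)))))))))) +
  ((bit n 0 + bit n 10) % 2 + ((bit n 1 + bit n 10) % 2 + ((bit n 2 + bit n 10) % 2 + ((bit n 3 + bit n 10) % 2 + ((bit n 4 + bit n 10) % 2 + ((bit n 5 + bit n 10) % 2 + ((bit n 6 + bit n 10) % 2 + ((bit n 7 + bit n 10) % 2 + ((bit n 8 + bit n 10) % 2 + ((bit n 9 + bit n 10) % 2))))))))))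

def P (n : ℕ) : Prop := n = 0 ∨ 6 ≤ wN n

instance : DecidablePred P := fun n => by unfold P; infer_instance

def chk (Q : ℕ → Prop) [DecidablePred Q] : ℕ → Bool
  | 0 => true
  | n+1 => decide (Q n) && chk Q n

lemma chk_sound (Q : ℕ → Prop) [DecidablePred Q] :
    ∀ n, chk Q n = true → ∀ m, m < n → Q m := by
  intro n
  induction n with
  | zero => intro _ m hm; omega
  | succ k ih =>
    intro h m hm
    rw [chk, Bool.and_eq_true] at h
    rcases Nat.lt_succ_iff_lt_or_eq.mp hm with h' | rfl
    · exact ih h.2 m h'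
    · exact of_decide_eq_true h.1

set_option maxHeartbeats 16000000 in
set_option maxRecDepth 100000 in
lemma allP : chk P 2048 = true := by decide

/-! ### Bridge between the Nat-level weight and the cycle-space support -/

lemma s3 (g : Fin 11 → ZMod 2) (a b c : Fin 11) (hab : a ≠ b) (hac : a ≠ c) (hbc : b ≠ c)
    (co : Fin 11 → ZMod 2) (hco : ∀ i, co i = if i = a ∨ i = b ∨ i = c then 1 else 0) :
    ∑ i, g i * co i = g a + g b + g c := by
  have h1 : ∀ i, g i * co i =
      (if i = a then g i else 0) + ((if i = b then g i else 0) + (if i = c then g i else 0)) := by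
    intro i
    rw [hco]
    by_cases h1 : i = a <;> by_cases h2 : i = b <;> by_cases h3 : i = c <;>
      simp_all <;> subst_vars <;> simp_all
  rw [Finset.sum_congr rfl fun i _ => h1 i, Finset.sum_add_distrib, Finset.sum_add_distrib]
  simp [Finset.sum_ite_eq']
  ring

lemma s2 (g : Fin 11 → ZMod 2) (a b : Fin 11) (hab : a ≠ b)
    (co : Fin 11 → ZMod 2) (hco : ∀ i, co i = if i = a ∨ i = b then 1 else 0) :
    ∑ i, g i * co i = g a + g b := by
  have h1 : ∀ i, g i * co i = (if i = a then g i else 0) + (if i = b then g i else 0) := by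
    intro i
    rw [hco]
    by_cases h1 : i = a <;> by_cases h2 : i = b <;> simp_all <;> subst_vars <;> simp_all
  rw [Finset.sum_congr rfl fun i _ => h1 i, Finset.sum_add_distrib]
  simp [Finset.sum_ite_eq']

lemma bridge3 (x y z : ℕ) (hx : x < 2) (hy : y < 2) (hz : z < 2) :
    (if ((if x = 1 then 1 else 0) + (if y = 1 then 1 else 0) + (if z = 1 then 1 else 0) : ZMod 2)
        ≠ 0 then (1 : ℕ) else 0) = (x + y + z) % 2 := by
  interval_cases x <;> interval_cases y <;> interval_cases z <;> decide

lemma bridge2 (x y : ℕ) (hx : x < 2) (hy : y < 2) :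
    (if ((if x = 1 then 1 else 0) + (if y = 1 then 1 else 0) : ZMod 2)
        ≠ 0 then (1 : ℕ) else 0) = (x + y) % 2 := by
  interval_cases x <;> interval_cases y <;> decide

lemma wBridge (n : ℕ) :
    (Finset.univ.filter fun e : Fin 3 × ZMod 10 => (∑ i, dec n i * cyc i e) ≠ 0).card = wN n := by
  have hcf : (Finset.univ.filter fun e : Fin 3 × ZMod 10 => (∑ i, dec n i * cyc i e) ≠ 0).card
      = ∑ e : Fin 3 × ZMod 10, if (∑ i, dec n i * cyc i e) ≠ 0 then (1 : ℕ) else 0 := by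
    rw [Finset.sum_boole, Nat.cast_id]
  rw [hcf, sumE, sumZ, sumZ, sumZ]
  have h00 : (if (∑ i, dec n i * cyc i ((0 : Fin 3), (0 : ZMod 10))) ≠ 0 then (1 : ℕ) else 0)
      = (bit n 0 + bit n 8 + bit n 9) % 2 := by
    rw [s3 (dec n) 0 8 9 (by decide) (by decide) (by decide) (fun i => cyc i (0, 0)) (by decide)]
    exact bridge3 (bit n 0) (bit n 8) (bit n 9) (bit_lt n 0) (bit_lt n 8) (bit_lt n 9)
  have h01 : (if (∑ i, dec n i * cyc i ((0 : Fin 3), (1 : ZMod 10))) ≠ 0 then (1 : ℕ) else 0)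
      = (bit n 0 + bit n 1 + bit n 9) % 2 := by
    rw [s3 (dec n) 0 1 9 (by decide) (by decide) (by decide) (fun i => cyc i (0, 1)) (by decide)]
    exact bridge3 (bit n 0) (bit n 1) (bit n 9) (bit_lt n 0) (bit_lt n 1) (bit_lt n 9)
  have h02 : (if (∑ i, dec n i * cyc i ((0 : Fin 3), (2 : ZMod 10))) ≠ 0 then (1 : ℕ) else 0)
      = (bit n 0 + bit n 1 + bit n 2) % 2 := by
    rw [s3 (dec n) 0 1 2 (by decide) (by decide) (by decide) (fun i => cyc i (0, 2)) (by decide)]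
    exact bridge3 (bit n 0) (bit n 1) (bit n 2) (bit_lt n 0) (bit_lt n 1) (bit_lt n 2)
  have h03 : (if (∑ i, dec n i * cyc i ((0 : Fin 3), (3 : ZMod 10))) ≠ 0 then (1 : ℕ) else 0)
      = (bit n 1 + bit n 2 + bit n 3) % 2 := by
    rw [s3 (dec n) 1 2 3 (by decide) (by decide) (by decide) (fun i => cyc i (0, 3)) (by decide)]
    exact bridge3 (bit n 1) (bit n 2) (bit n 3) (bit_lt n 1) (bit_lt n 2) (bit_lt n 3)
  have h04 : (if (∑ i, dec n i * cyc i ((0 : Fin 3), (4 : ZMod 10))) ≠ 0 then (1 : ℕ) else 0)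
      = (bit n 2 + bit n 3 + bit n 4) % 2 := by
    rw [s3 (dec n) 2 3 4 (by decide) (by decide) (by decide) (fun i => cyc i (0, 4)) (by decide)]
    exact bridge3 (bit n 2) (bit n 3) (bit n 4) (bit_lt n 2) (bit_lt n 3) (bit_lt n 4)
  have h05 : (if (∑ i, dec n i * cyc i ((0 : Fin 3), (5 : ZMod 10))) ≠ 0 then (1 : ℕ) else 0)
      = (bit n 3 + bit n 4 + bit n 5) % 2 := by
    rw [s3 (dec n) 3 4 5 (by decide) (by decide) (by decide) (fun i => cyc i (0, 5)) (by decide)]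
    exact bridge3 (bit n 3) (bit n 4) (bit n 5) (bit_lt n 3) (bit_lt n 4) (bit_lt n 5)
  have h06 : (if (∑ i, dec n i * cyc i ((0 : Fin 3), (6 : ZMod 10))) ≠ 0 then (1 : ℕ) else 0)
      = (bit n 4 + bit n 5 + bit n 6) % 2 := by
    rw [s3 (dec n) 4 5 6 (by decide) (by decide) (by decide) (fun i => cyc i (0, 6)) (by decide)]
    exact bridge3 (bit n 4) (bit n 5) (bit n 6) (bit_lt n 4) (bit_lt n 5) (bit_lt n 6)
  have h07 : (if (∑ i, dec n i * cyc i ((0 : Fin 3), (7 : ZMod 10))) ≠ 0 then (1 : ℕ) else 0)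
      = (bit n 5 + bit n 6 + bit n 7) % 2 := by
    rw [s3 (dec n) 5 6 7 (by decide) (by decide) (by decide) (fun i => cyc i (0, 7)) (by decide)]
    exact bridge3 (bit n 5) (bit n 6) (bit n 7) (bit_lt n 5) (bit_lt n 6) (bit_lt n 7)
  have h08 : (if (∑ i, dec n i * cyc i ((0 : Fin 3), (8 : ZMod 10))) ≠ 0 then (1 : ℕ) else 0)
      = (bit n 6 + bit n 7 + bit n 8) % 2 := by
    rw [s3 (dec n) 6 7 8 (by decide) (by decide) (by decide) (fun i => cyc i (0, 8)) (by decide)]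
    exact bridge3 (bit n 6) (bit n 7) (bit n 8) (bit_lt n 6) (bit_lt n 7) (bit_lt n 8)
  have h09 : (if (∑ i, dec n i * cyc i ((0 : Fin 3), (9 : ZMod 10))) ≠ 0 then (1 : ℕ) else 0)
      = (bit n 7 + bit n 8 + bit n 9) % 2 := by
    rw [s3 (dec n) 7 8 9 (by decide) (by decide) (by decide) (fun i => cyc i (0, 9)) (by decide)]
    exact bridge3 (bit n 7) (bit n 8) (bit n 9) (bit_lt n 7) (bit_lt n 8) (bit_lt n 9)
  have h10 : (if (∑ i, dec n i * cyc i ((1 : Fin 3), (0 : ZMod 10))) ≠ 0 then (1 : ℕ) else 0)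
      = (bit n 0 + bit n 7) % 2 := by
    rw [s2 (dec n) 0 7 (by decide) (fun i => cyc i (1, 0)) (by decide)]
    exact bridge2 (bit n 0) (bit n 7) (bit_lt n 0) (bit_lt n 7)
  have h11 : (if (∑ i, dec n i * cyc i ((1 : Fin 3), (1 : ZMod 10))) ≠ 0 then (1 : ℕ) else 0)
      = (bit n 1 + bit n 8) % 2 := by
    rw [s2 (dec n) 1 8 (by decide) (fun i => cyc i (1, 1)) (by decide)]
    exact bridge2 (bit n 1) (bit n 8) (bit_lt n 1) (bit_lt n 8)
  have h12 : (if (∑ i, dec n i * cyc i ((1 : Fin 3), (2 : ZMod 10))) ≠ 0 then (1 : ℕ) else 0)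
      = (bit n 2 + bit n 9) % 2 := by
    rw [s2 (dec n) 2 9 (by decide) (fun i => cyc i (1, 2)) (by decide)]
    exact bridge2 (bit n 2) (bit n 9) (bit_lt n 2) (bit_lt n 9)
  have h13 : (if (∑ i, dec n i * cyc i ((1 : Fin 3), (3 : ZMod 10))) ≠ 0 then (1 : ℕ) else 0)
      = (bit n 0 + bit n 3) % 2 := by
    rw [s2 (dec n) 0 3 (by decide) (fun i => cyc i (1, 3)) (by decide)]
    exact bridge2 (bit n 0) (bit n 3) (bit_lt n 0) (bit_lt n 3)
  have h14 : (if (∑ i, dec n i * cyc i ((1 : Fin 3), (4 : ZMod 10))) ≠ 0 then (1 : ℕ) else 0)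
      = (bit n 1 + bit n 4) % 2 := by
    rw [s2 (dec n) 1 4 (by decide) (fun i => cyc i (1, 4)) (by decide)]
    exact bridge2 (bit n 1) (bit n 4) (bit_lt n 1) (bit_lt n 4)
  have h15 : (if (∑ i, dec n i * cyc i ((1 : Fin 3), (5 : ZMod 10))) ≠ 0 then (1 : ℕ) else 0)
      = (bit n 2 + bit n 5) % 2 := by
    rw [s2 (dec n) 2 5 (by decide) (fun i => cyc i (1, 5)) (by decide)]
    exact bridge2 (bit n 2) (bit n 5) (bit_lt n 2) (bit_lt n 5)
  have h16 : (if (∑ i, dec n i * cyc i ((1 : Fin 3), (6 : ZMod 10))) ≠ 0 then (1 : ℕ) else 0)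
      = (bit n 3 + bit n 6) % 2 := by
    rw [s2 (dec n) 3 6 (by decide) (fun i => cyc i (1, 6)) (by decide)]
    exact bridge2 (bit n 3) (bit n 6) (bit_lt n 3) (bit_lt n 6)
  have h17 : (if (∑ i, dec n i * cyc i ((1 : Fin 3), (7 : ZMod 10))) ≠ 0 then (1 : ℕ) else 0)
      = (bit n 4 + bit n 7) % 2 := by
    rw [s2 (dec n) 4 7 (by decide) (fun i => cyc i (1, 7)) (by decide)]
    exact bridge2 (bit n 4) (bit n 7) (bit_lt n 4) (bit_lt n 7)
  have h18 : (if (∑ i, dec n i * cyc i ((1 : Fin 3), (8 : ZMod 10))) ≠ 0 then (1 : ℕ) else 0)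
      = (bit n 5 + bit n 8) % 2 := by
    rw [s2 (dec n) 5 8 (by decide) (fun i => cyc i (1, 8)) (by decide)]
    exact bridge2 (bit n 5) (bit n 8) (bit_lt n 5) (bit_lt n 8)
  have h19 : (if (∑ i, dec n i * cyc i ((1 : Fin 3), (9 : ZMod 10))) ≠ 0 then (1 : ℕ) else 0)
      = (bit n 6 + bit n 9) % 2 := by
    rw [s2 (dec n) 6 9 (by decide) (fun i => cyc i (1, 9)) (by decide)]
    exact bridge2 (bit n 6) (bit n 9) (bit_lt n 6) (bit_lt n 9)
  have h20 : (if (∑ i, dec n i * cyc i ((2 : Fin 3), (0 : ZMod 10))) ≠ 0 then (1 : ℕ) else 0)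
      = (bit n 0 + bit n 10) % 2 := by
    rw [s2 (dec n) 0 10 (by decide) (fun i => cyc i (2, 0)) (by decide)]
    exact bridge2 (bit n 0) (bit n 10) (bit_lt n 0) (bit_lt n 10)
  have h21 : (if (∑ i, dec n i * cyc i ((2 : Fin 3), (1 : ZMod 10))) ≠ 0 then (1 : ℕ) else 0)
      = (bit n 1 + bit n 10) % 2 := by
    rw [s2 (dec n) 1 10 (by decide) (fun i => cyc i (2, 1)) (by decide)]
    exact bridge2 (bit n 1) (bit n 10) (bit_lt n 1) (bit_lt n 10)
  have h22 : (if (∑ i, dec n i * cyc i ((2 : Fin 3), (2 : ZMod 10))) ≠ 0 then (1 : ℕ) else 0)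
      = (bit n 2 + bit n 10) % 2 := by
    rw [s2 (dec n) 2 10 (by decide) (fun i => cyc i (2, 2)) (by decide)]
    exact bridge2 (bit n 2) (bit n 10) (bit_lt n 2) (bit_lt n 10)
  have h23 : (if (∑ i, dec n i * cyc i ((2 : Fin 3), (3 : ZMod 10))) ≠ 0 then (1 : ℕ) else 0)
      = (bit n 3 + bit n 10) % 2 := by
    rw [s2 (dec n) 3 10 (by decide) (fun i => cyc i (2, 3)) (by decide)]
    exact bridge2 (bit n 3) (bit n 10) (bit_lt n 3) (bit_lt n 10)
  have h24 : (if (∑ i, dec n i * cyc i ((2 : Fin 3), (4 : ZMod 10))) ≠ 0 then (1 : ℕ) else 0)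
      = (bit n 4 + bit n 10) % 2 := by
    rw [s2 (dec n) 4 10 (by decide) (fun i => cyc i (2, 4)) (by decide)]
    exact bridge2 (bit n 4) (bit n 10) (bit_lt n 4) (bit_lt n 10)
  have h25 : (if (∑ i, dec n i * cyc i ((2 : Fin 3), (5 : ZMod 10))) ≠ 0 then (1 : ℕ) else 0)
      = (bit n 5 + bit n 10) % 2 := by
    rw [s2 (dec n) 5 10 (by decide) (fun i => cyc i (2, 5)) (by decide)]
    exact bridge2 (bit n 5) (bit n 10) (bit_lt n 5) (bit_lt n 10)
  have h26 : (if (∑ i, dec n i * cyc i ((2 : Fin 3), (6 : ZMod 10))) ≠ 0 then (1 : ℕ) else 0)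
      = (bit n 6 + bit n 10) % 2 := by
    rw [s2 (dec n) 6 10 (by decide) (fun i => cyc i (2, 6)) (by decide)]
    exact bridge2 (bit n 6) (bit n 10) (bit_lt n 6) (bit_lt n 10)
  have h27 : (if (∑ i, dec n i * cyc i ((2 : Fin 3), (7 : ZMod 10))) ≠ 0 then (1 : ℕ) else 0)
      = (bit n 7 + bit n 10) % 2 := by
    rw [s2 (dec n) 7 10 (by decide) (fun i => cyc i (2, 7)) (by decide)]
    exact bridge2 (bit n 7) (bit n 10) (bit_lt n 7) (bit_lt n 10)
  have h28 : (if (∑ i, dec n i * cyc i ((2 : Fin 3), (8 : ZMod 10))) ≠ 0 then (1 : ℕ) else 0)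
      = (bit n 8 + bit n 10) % 2 := by
    rw [s2 (dec n) 8 10 (by decide) (fun i => cyc i (2, 8)) (by decide)]
    exact bridge2 (bit n 8) (bit n 10) (bit_lt n 8) (bit_lt n 10)
  have h29 : (if (∑ i, dec n i * cyc i ((2 : Fin 3), (9 : ZMod 10))) ≠ 0 then (1 : ℕ) else 0)
      = (bit n 9 + bit n 10) % 2 := by
    rw [s2 (dec n) 9 10 (by decide) (fun i => cyc i (2, 9)) (by decide)]
    exact bridge2 (bit n 9) (bit n 10) (bit_lt n 9) (bit_lt n 10)

  simp only [h00, h01, h02, h03, h04, h05, h06, h07, h08, h09, h10, h11, h12, h13, h14, h15, h16, h17, h18, h19, h20, h21, h22, h23, h24, h25, h26, h27, h28, h29]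
  rfl

/-- Decoding is surjective onto `Fin 11 → ZMod 2`. -/
lemma dec_surj : Function.Surjective (fun n : Fin 2048 => dec n.val) := by
  have hinj : Function.Injective (fun n : Fin 2048 => dec n.val) := by
    intro a b hab
    apply Fin.ext
    apply Nat.eq_of_testBit_eq
    intro i
    by_cases hi : i < 11
    · have h := congrFun hab ⟨i, hi⟩
      simp only [dec] at h
      rw [Nat.testBit_eq_decide_div_mod_eq, Nat.testBit_eq_decide_div_mod_eq]
      by_cases ha : bit a.val i = 1 <;> by_cases hb : bit b.val i = 1
      · simp only [bit] at ha hb; simp [ha, hb]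
      · rw [if_pos ha, if_neg hb] at h; exact absurd h (by decide)
      · rw [if_neg ha, if_pos hb] at h; exact absurd h (by decide)
      · simp only [bit] at ha hb; simp [ha, hb]
    · have h2 : (2048 : ℕ) ≤ 2 ^ i := by
        calc (2048 : ℕ) = 2 ^ 11 := by norm_num
        _ ≤ 2 ^ i := Nat.pow_le_pow_right (by norm_num) (by omega)
      rw [Nat.testBit_eq_false_of_lt (lt_of_lt_of_le a.isLt h2),
        Nat.testBit_eq_false_of_lt (lt_of_lt_of_le b.isLt h2)]
  have hcard : Fintype.card (Fin 2048) = Fintype.card (Fin 11 → ZMod 2) := by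
    rw [Fintype.card_fin, Fintype.card_pi]
    simp
  exact ((Fintype.bijective_iff_injective_and_card _).mpr ⟨hinj, hcard⟩).2

/-- Every nonzero element in the span of the basis cycles has support at least 6. -/
lemma support_ge (g : Fin 11 → ZMod 2) (hg : g ≠ 0) :
    6 ≤ (Finset.univ.filter fun e : Fin 3 × ZMod 10 => (∑ i, g i * cyc i e) ≠ 0).card := by
  obtain ⟨n, hn⟩ := dec_surj g
  have hP : P n.val := chk_sound P 2048 allP n.val n.isLt
  rcases hP with h0 | h6
  · exfalso
    apply hg
    rw [← hn]
    funext i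
    simp [dec, bit, h0, Nat.zero_div]
  · rw [show g = dec n.val from hn.symm]
    rw [wBridge]
    exact h6

/-! ### The basis and the main theorem ingredients -/

open Finset in
noncomputable def B : Finset ((Fin 3 × ZMod 10) → ZMod 2) := Finset.image cyc Finset.univ

lemma mem_cycleSpace (x : (Fin 3 × ZMod 10) → ZMod 2) :
    x ∈ desarguesGraph.cycleSpace ↔
      ∀ v : Bool × ZMod 10, ∑ e : Fin 3 × ZMod 10, desarguesGraph.inc v e * x e = 0 :=
  Iff.rfl

lemma memC (j : Fin 11) : cyc j ∈ desarguesGraph.cycleSpace := by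
  rw [mem_cycleSpace]
  intro v
  rw [Finset.sum_congr rfl fun e _ => by rw [inc_eq]]
  exact cyc_mem' j v

/-- The linear-combination map. -/
noncomputable def Lmap : (Fin 11 → ZMod 2) →ₗ[ZMod 2] ((Fin 3 × ZMod 10) → ZMod 2) where
  toFun g := ∑ i, g i • cyc i
  map_add' a b := by
    simp only [Pi.add_apply, add_smul]
    rw [Finset.sum_add_distrib]
  map_smul' c a := by
    simp only [Pi.smul_apply, smul_eq_mul, RingHom.id_apply, mul_smul]
    rw [Finset.smul_sum]

lemma Lmap_apply (g : Fin 11 → ZMod 2) (e : Fin 3 × ZMod 10) :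
    Lmap g e = ∑ i, g i * cyc i e := by
  show (∑ i, g i • cyc i) e = _
  rw [Finset.sum_apply]
  simp

lemma Lmap_mem (g : Fin 11 → ZMod 2) : Lmap g ∈ desarguesGraph.cycleSpace := by
  show (∑ i, g i • cyc i) ∈ _
  exact Submodule.sum_mem _ fun i _ => Submodule.smul_mem _ _ (memC i)

lemma Lmap_mem_span (g : Fin 11 → ZMod 2) :
    Lmap g ∈ Submodule.span (ZMod 2) (B : Set ((Fin 3 × ZMod 10) → ZMod 2)) := by
  show (∑ i, g i • cyc i) ∈ _
  refine Submodule.sum_mem _ fun i _ => Submodule.smul_mem _ _ (Submodule.subset_span ?_)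
  simp only [B, Finset.coe_image, Finset.coe_univ, Set.image_univ]
  exact Set.mem_range_self i

lemma span_B : Submodule.span (ZMod 2) (B : Set ((Fin 3 × ZMod 10) → ZMod 2))
    = desarguesGraph.cycleSpace := by
  apply le_antisymm
  · rw [Submodule.span_le]
    intro x hx
    simp only [B, Finset.coe_image, Finset.coe_univ, Set.image_univ, Set.mem_range] at hx
    obtain ⟨j, rfl⟩ := hx
    exact memC j
  · intro x hx
    -- restriction to cotree edges is bijective on coefficient space
    set φ : (Fin 11 → ZMod 2) →ₗ[ZMod 2] (Fin 11 → ZMod 2) :=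
      (LinearMap.funLeft (ZMod 2) (ZMod 2) ctedge).comp Lmap with hφ
    have hφinj : Function.Injective φ := by
      rw [← LinearMap.ker_eq_bot, eq_bot_iff]
      intro g hg
      have hg' : ∀ j, Lmap g (ctedge j) = 0 := fun j => congrFun (LinearMap.mem_ker.mp hg) j
      have : g = 0 := indep11 g fun j => by rw [← Lmap_apply]; exact hg' j
      simp [this]
    have hφsurj : Function.Surjective φ := LinearMap.injective_iff_surjective.mp hφinj
    obtain ⟨g, hg⟩ := hφsurj (fun j => x (ctedge j))
    set y : (Fin 3 × ZMod 10) → ZMod 2 := x + Lmap g with hy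
    have hymem : y ∈ desarguesGraph.cycleSpace := add_mem hx (Lmap_mem g)
    have hct : ∀ j, y (ctedge j) = 0 := by
      intro j
      have h1 : Lmap g (ctedge j) = x (ctedge j) := congrFun hg j
      show x (ctedge j) + Lmap g (ctedge j) = 0
      rw [h1]
      exact z2self _
    have hinner : ∀ k : ZMod 10, y (2, k) = 0 := by
      intro k
      have hk : k.val < 10 := ZMod.val_lt k
      have hkk : ((k.val : ℕ) : ZMod 10) = k := ZMod.natCast_rightInverse k
      have hce : ctedge ⟨k.val, by omega⟩ = (2, k) := by
        rw [ctedge]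
        rw [if_pos hk, hkk]
      have := hct ⟨k.val, by omega⟩
      rwa [hce] at this
    have h09 : y (0, 9) = 0 := by
      have := hct ⟨10, by omega⟩
      rw [show ctedge ⟨10, by omega⟩ = ((0 : Fin 3), (9 : ZMod 10)) from rfl] at this
      exact this
    have hy0 : y = 0 := elim_zero y (fun v => vertexEq y hymem v) hinner h09
    have hxL : x = Lmap g := by
      funext e
      exact z2 _ _ (congrFun hy0 e)
    rw [hxL]
    exact Lmap_mem_span g

lemma B_indep : LinearIndependent (ZMod 2)
    (fun x : (B : Finset ((Fin 3 × ZMod 10) → ZMod 2)) => (x : (Fin 3 × ZMod 10) → ZMod 2)) := by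
  have hLI : LinearIndependent (ZMod 2) cyc := by
    rw [Fintype.linearIndependent_iff]
    intro g hg
    have hg' : g = 0 := by
      apply indep11
      intro j
      have := congrFun hg (ctedge j)
      rw [Finset.sum_apply] at this
      simpa using this
    intro i; rw [hg']; rfl
  have hset : ((B : Finset ((Fin 3 × ZMod 10) → ZMod 2)) : Set ((Fin 3 × ZMod 10) → ZMod 2))
      = Set.range cyc := by
    simp [B]
  have h2 := (linearIndepOn_id_range_iff cyc_inj).mpr hLI
  rw [← hset] at h2
  exact h2

lemma B_card : (B : Finset ((Fin 3 × ZMod 10) → ZMod 2)).card = 11 := by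
  rw [B, Finset.card_image_of_injective _ cyc_inj, Finset.card_univ, Fintype.card_fin]

lemma B_charge (e : Fin 3 × ZMod 10) : desarguesGraph.charge B e ≤ 3 := by
  have h1 : desarguesGraph.charge B e = (B.filter fun x => x e ≠ 0).card := by
    unfold Multigraph.charge
    congr
  rw [h1, B]
  have h2 : (Finset.image cyc Finset.univ).filter (fun x => x e ≠ 0)
      = Finset.image cyc (Finset.univ.filter fun j => cyc j e ≠ 0) := by
    ext x
    simp only [Finset.mem_filter, Finset.mem_image, Finset.mem_univ, true_and]
    constructor
    · rintro ⟨⟨j, rfl⟩, hx⟩; exact ⟨j, hx, rfl⟩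
    · rintro ⟨j, hj, rfl⟩; exact ⟨⟨j, rfl⟩, hj⟩
  rw [h2]
  exact le_trans (Finset.card_image_le) (charge_le3 e)

lemma B_isKBasis : desarguesGraph.IsKBasis 3 B := by
  refine ⟨⟨?_, B_indep, span_B⟩, B_charge⟩
  intro x hx
  obtain ⟨j, _, rfl⟩ := Finset.mem_image.mp hx
  exact memC j

/-- Every nonzero cycle-space element has support at least 6 (girth bound). -/
lemma cycleSpace_support (x : (Fin 3 × ZMod 10) → ZMod 2)
    (hx : x ∈ desarguesGraph.cycleSpace) (hx0 : x ≠ 0) :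
    6 ≤ (Finset.univ.filter fun e : Fin 3 × ZMod 10 => x e ≠ 0).card := by
  rw [← span_B] at hx
  have hx' : x ∈ Submodule.span (ZMod 2) (Set.range cyc) := by
    rwa [show Set.range cyc
        = ((B : Finset ((Fin 3 × ZMod 10) → ZMod 2)) : Set ((Fin 3 × ZMod 10) → ZMod 2)) from by
      simp [B]]
  obtain ⟨g, hg⟩ := (Submodule.mem_span_range_iff_exists_fun (ZMod 2)).mp hx'
  have hgne : g ≠ 0 := by
    rintro rfl
    apply hx0
    rw [← hg]
    funext e
    rw [Finset.sum_apply]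
    simp
  have h6 := support_ge g hgne
  have hval : ∀ e, (∑ i, g i * cyc i e) = x e := by
    intro e
    rw [← hg, Finset.sum_apply]
    simp
  rwa [Finset.filter_congr fun e _ => by rw [hval e]] at h6

lemma lower_bound (k : ℕ) (B' : Finset ((Fin 3 × ZMod 10) → ZMod 2))
    (hk : desarguesGraph.IsKBasis k B') : 3 ≤ k := by
  by_contra hlt
  push_neg at hlt
  obtain ⟨⟨hmem, hindep, hspan⟩, hcharge⟩ := hk
  -- cardinality of B' is at least 11
  have hcard : 11 ≤ B'.card := by
    have h1 : Module.finrank (ZMod 2) desarguesGraph.cycleSpace ≤ B'.card := by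
      rw [← hspan]
      simpa [Set.finrank] using finrank_span_finset_le_card (R := ZMod 2) B'
    have h2 : 11 ≤ Module.finrank (ZMod 2) desarguesGraph.cycleSpace := by
      have hLI : LinearIndependent (ZMod 2) cyc := by
        rw [Fintype.linearIndependent_iff]
        intro g hg
        have hg' : g = 0 := by
          apply indep11
          intro j
          have := congrFun hg (ctedge j)
          rw [Finset.sum_apply] at this
          simpa using this
        intro i; rw [hg']; rfl
      have cyc' : Fin 11 → desarguesGraph.cycleSpace := fun i => ⟨cyc i, memC i⟩
      have hLI' : LinearIndependent (ZMod 2) (fun i => (⟨cyc i, memC i⟩ :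
          desarguesGraph.cycleSpace)) := by
        apply LinearIndependent.of_comp (desarguesGraph.cycleSpace.subtype)
        convert hLI
        rfl
      simpa using hLI'.fintype_card_le_finrank
    omega
  -- counting: total charge = total support
  have hcount : ∑ e : Fin 3 × ZMod 10, desarguesGraph.charge B' e
      = ∑ x ∈ B', (Finset.univ.filter fun e : Fin 3 × ZMod 10 => x e ≠ 0).card := by
    have h1 : ∀ e, desarguesGraph.charge B' e
        = ∑ x ∈ B', if x e ≠ 0 then 1 else 0 := by
      intro e
      have : desarguesGraph.charge B' e = (B'.filter fun x => x e ≠ 0).card := by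
        unfold Multigraph.charge
        congr
      rw [this]
      have hb := Finset.sum_boole (R := ℕ) (fun x => x e ≠ 0) B'
      rw [Nat.cast_id] at hb
      exact hb.symm
    have h2 : ∀ x : (Fin 3 × ZMod 10) → ZMod 2,
        (Finset.univ.filter fun e : Fin 3 × ZMod 10 => x e ≠ 0).card
        = ∑ e : Fin 3 × ZMod 10, if x e ≠ 0 then 1 else 0 := by
      intro x
      have hb := Finset.sum_boole (R := ℕ) (fun e : Fin 3 × ZMod 10 => x e ≠ 0) Finset.univ
      rw [Nat.cast_id] at hb
      exact hb.symm
    rw [Finset.sum_congr rfl fun e _ => h1 e, Finset.sum_comm,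
      Finset.sum_congr rfl fun x _ => (h2 x).symm]
  -- each element of B' has support at least 6
  have hsupp : ∀ x ∈ B', 6 ≤ (Finset.univ.filter fun e : Fin 3 × ZMod 10 => x e ≠ 0).card := by
    intro x hx
    apply cycleSpace_support x (hmem x hx)
    exact hindep.ne_zero ⟨x, hx⟩
  have hlow : 66 ≤ ∑ x ∈ B', (Finset.univ.filter fun e : Fin 3 × ZMod 10 => x e ≠ 0).card := by
    calc (66 : ℕ) = 11 * 6 := by norm_num
    _ ≤ B'.card * 6 := Nat.mul_le_mul_right 6 hcard
    _ = B'.card • 6 := by rw [smul_eq_mul]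
    _ ≤ ∑ x ∈ B', (Finset.univ.filter fun e : Fin 3 × ZMod 10 => x e ≠ 0).card :=
        Finset.card_nsmul_le_sum B'
          (fun x => (Finset.univ.filter fun e : Fin 3 × ZMod 10 => x e ≠ 0).card) 6 hsupp
  have hk2 : k ≤ 2 := Nat.lt_succ_iff.mp hlt
  have hhigh : ∑ e : Fin 3 × ZMod 10, desarguesGraph.charge B' e ≤ 60 := by
    calc ∑ e : Fin 3 × ZMod 10, desarguesGraph.charge B' e
        ≤ ∑ _e : Fin 3 × ZMod 10, 2 :=
          Finset.sum_le_sum fun e _ => le_trans (hcharge e) hk2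
    _ = 60 := by simp [Finset.card_univ]
  have habs : (66 : ℕ) ≤ 60 := le_trans hlow (le_trans (le_of_eq hcount.symm) hhigh)
  norm_num at habs

end DesarguesAux

/-- The Desargues graph (the bipartite double cover of the Petersen graph,
a 3-regular graph on 20 vertices) has basis number exactly 3. -/
theorem desargues_basisNum : desarguesGraph.basisNum = 3 := by
  unfold Multigraph.basisNum
  apply le_antisymm
  · exact Nat.sInf_le ⟨DesarguesAux.B, DesarguesAux.B_isKBasis⟩
  · refine le_csInf ⟨3, DesarguesAux.B, DesarguesAux.B_isKBasis⟩ ?_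
    rintro k ⟨B', hB'⟩
    exact DesarguesAux.lower_bound k B' hB'
end
end
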